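/- Let 𝕋_t be a triod evolving by curvature on [0,T) with fixed endpoints P¹,P²,P³, and set d^i = |P^i − x₀| for x₀ ∈ ℝ². Then for every index i ∈ {1,2,3} and every t ∈ [0,T), |∫_t^T ⟨(P^i−x₀)/(2(T−ξ)), τ^i(1,ξ)⟩ ρ_{x₀}(P^i,ξ) dξ| ≤ (1/√(2π)) ∫_{d^i/√(2(T−t))}^{+∞} e^{−y²/2} dy ≤ 1/2; consequently, for every x₀ ∈ ℝ², lim_{t→T} Σ_{i=1}^3 ∫_t^T ⟨(P^i−x₀)/(2(T−ξ)), τ^i(1,ξ)⟩ ρ_{x₀}(P^i,ξ) dξ = 0 whenever x₀ ≠ P^i for all i, and the bound by 1/2 holds for every x₀. -/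

import Mathlib

noncomputable section

open Set Filter Metric MeasureTheory Real
open scoped Topology ENNReal NNReal

/-- The Euclidean plane. -/
abbrev E2 : Type := EuclideanSpace ℝ (Fin 2)

/-- Counterclockwise rotation by `π/2` centered at the origin. -/
def rot (v : E2) : E2 := (WithLp.equiv 2 (Fin 2 → ℝ)).symm ![-(v 1), v 0]

/-- Spatial derivative `γ_x` of a one-parameter family of curves. -/
def dX (γ : ℝ → ℝ → E2) (x t : ℝ) : E2 := deriv (fun y => γ y t) x

/-- Second spatial derivative `γ_xx`. -/
def dXX (γ : ℝ → ℝ → E2) (x t : ℝ) : E2 := deriv (fun y => dX γ y t) x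

/-- Time derivative `γ_t`. -/
def dT (γ : ℝ → ℝ → E2) (x t : ℝ) : E2 := deriv (fun s => γ x s) t

/-- Unit tangent vector `τ = γ_x/|γ_x|`. -/
def tangent (γ : ℝ → ℝ → E2) (x t : ℝ) : E2 := ‖dX γ x t‖⁻¹ • dX γ x t

/-- Unit normal vector `ν = R τ`. -/
def normal (γ : ℝ → ℝ → E2) (x t : ℝ) : E2 := rot (tangent γ x t)

/-- Curvature `k = ⟨γ_xx, ν⟩/|γ_x|²`. -/
def curv (γ : ℝ → ℝ → E2) (x t : ℝ) : ℝ :=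
  (inner ℝ (dXX γ x t) (normal γ x t)) / ‖dX γ x t‖ ^ 2

/-- Tangential velocity `λ = ⟨γ_xx, τ⟩/|γ_x|²`. -/
def tanVel (γ : ℝ → ℝ → E2) (x t : ℝ) : ℝ :=
  (inner ℝ (dXX γ x t) (tangent γ x t)) / ‖dX γ x t‖ ^ 2

/-- Arclength derivative `∂_s f = |γ_x|⁻¹ ∂_x f` of a function along the evolving curve. -/
def dS (γ : ℝ → ℝ → E2) (f : ℝ → ℝ → ℝ) (x t : ℝ) : ℝ :=
  ‖dX γ x t‖⁻¹ * deriv (fun y => f y t) x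

/-- A one-parameter family of triods `𝕋_t = ⋃ᵢ γⁱ(·,t)` evolving by curvature in `Ω`
over the set of times `J`, with fixed endpoints `P i ∈ ∂Ω`: the curves are `C²` in space
and `C¹` in time, regular, embedded, meet `∂Ω` exactly at the fixed endpoints, intersect
each other only at the common 3-point where the unit tangents sum to zero
(120-degree condition), and they move with velocity `γ_xx/|γ_x|²`. -/
structure IsTriodFlow (Ω : Set E2) (P : Fin 3 → E2)
    (γ : Fin 3 → ℝ → ℝ → E2) (J : Set ℝ) : Prop where
  smooth_x : ∀ i, ∀ t ∈ J, ContDiffOn ℝ 2 (fun x => γ i x t) (Icc 0 1)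
  smooth_t : ∀ i, ∀ x ∈ Icc (0:ℝ) 1, ContDiffOn ℝ 1 (fun s => γ i x s) J
  regular : ∀ i, ∀ x ∈ Icc (0:ℝ) 1, ∀ t ∈ J, dX (γ i) x t ≠ 0
  maps_to : ∀ i, ∀ x ∈ Icc (0:ℝ) 1, ∀ t ∈ J, γ i x t ∈ closure Ω
  boundary : ∀ i, ∀ x ∈ Icc (0:ℝ) 1, ∀ t ∈ J, (γ i x t ∈ frontier Ω ↔ x = 1)
  endpoint : ∀ i, ∀ t ∈ J, γ i 1 t = P i
  simple : ∀ i, ∀ t ∈ J, InjOn (fun x => γ i x t) (Icc 0 1)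
  pairwise : ∀ i j, i ≠ j → ∀ t ∈ J, ∀ x ∈ Icc (0:ℝ) 1, ∀ y ∈ Icc (0:ℝ) 1,
    γ i x t = γ j y t → x = 0 ∧ y = 0
  junction : ∀ i j, ∀ t ∈ J, γ i 0 t = γ j 0 t
  angle : ∀ t ∈ J, ∑ i : Fin 3, tangent (γ i) 0 t = 0
  motion : ∀ i, ∀ x ∈ Icc (0:ℝ) 1, ∀ t ∈ J,
    dT (γ i) x t = (‖dX (γ i) x t‖ ^ 2)⁻¹ • dXX (γ i) x t

/-- Length of one evolving curve at time `t`. -/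
def curveLength (γ : ℝ → ℝ → E2) (t : ℝ) : ℝ := ∫ x in (0:ℝ)..1, ‖dX γ x t‖

/-- The triod `𝕋_t` as a subset of the plane. -/
def triodSet (γ : Fin 3 → ℝ → ℝ → E2) (t : ℝ) : Set E2 :=
  ⋃ i : Fin 3, (fun x => γ i x t) '' Icc (0:ℝ) 1

/-- The backward heat kernel of `ℝ²` relative to `(x₀, T)`:
`ρ_{x₀}(x,t) = exp(−|x−x₀|²/(4(T−t)))/√(4π(T−t))`. -/
def heatKer (T : ℝ) (x₀ : E2) (x : E2) (t : ℝ) : ℝ :=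
  Real.exp (-‖x - x₀‖ ^ 2 / (4 * (T - t))) / Real.sqrt (4 * π * (T - t))

/-- The Gaussian density `Θ(x₀,t) = ∫_{𝕋_t} ρ_{x₀}(·,t) ds` of the evolving triod. -/
def gaussDensity (γ : Fin 3 → ℝ → ℝ → E2) (T : ℝ) (x₀ : E2) (t : ℝ) : ℝ :=
  ∑ i : Fin 3, ∫ x in (0:ℝ)..1, heatKer T x₀ (γ i x t) t * ‖dX (γ i) x t‖

/-- The boundary term of the monotonicity formula at the endpoint `Pⁱ`:
`⟨(Pⁱ−x₀)/(2(T−ξ)), τⁱ(1,ξ)⟩ ρ_{x₀}(Pⁱ,ξ)`. -/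
def boundaryTerm (γ : Fin 3 → ℝ → ℝ → E2) (P : Fin 3 → E2) (T : ℝ) (x₀ : E2)
    (i : Fin 3) (ξ : ℝ) : ℝ :=
  (inner ℝ ((2 * (T - ξ))⁻¹ • (P i - x₀)) (tangent (γ i) 1 ξ)) * heatKer T x₀ (P i) ξ


lemma gauss_change (T t d : ℝ) (ht : t < T) (hd : 0 < d) :
    IntegrableOn (fun ξ => (2*(T-ξ))⁻¹ * d *
        (Real.exp (-d^2/(4*(T-ξ))) / Real.sqrt (4*π*(T-ξ)))) (Ioo t T) ∧
    (∫ ξ in Ioo t T, (2*(T-ξ))⁻¹ * d *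
        (Real.exp (-d^2/(4*(T-ξ))) / Real.sqrt (4*π*(T-ξ))))
      = (Real.sqrt (2*π))⁻¹ * ∫ y in Ioi (d / Real.sqrt (2*(T-t))), Real.exp (-y^2/2) := by
  set c : ℝ := d / Real.sqrt (2*(T-t)) with hc
  have hTt : 0 < 2*(T-t) := by linarith
  have hsq : 0 < Real.sqrt (2*(T-t)) := Real.sqrt_pos.2 hTt
  have hcpos : 0 < c := div_pos hd hsq
  set u : ℝ → ℝ := fun ξ => d / Real.sqrt (2*(T-ξ)) with hu
  set u' : ℝ → ℝ := fun ξ => d / ((2*(T-ξ)) * Real.sqrt (2*(T-ξ))) with hu'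
  -- basic positivity on Ioo
  have hw : ∀ ξ ∈ Ioo t T, 0 < 2*(T-ξ) := fun ξ hξ => by
    have := hξ.2; linarith
  -- derivative
  have hderiv : ∀ ξ ∈ Ioo t T, HasDerivWithinAt u (u' ξ) (Ioo t T) ξ := by
    intro ξ hξ
    have hwξ : 0 < 2*(T-ξ) := hw ξ hξ
    have hsξ : 0 < Real.sqrt (2*(T-ξ)) := Real.sqrt_pos.2 hwξ
    have h1 : HasDerivAt (fun ξ : ℝ => 2*(T-ξ)) (-2) ξ := by
      simpa using ((hasDerivAt_id ξ).const_sub T).const_mul 2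
    have h2 : HasDerivAt (fun ξ : ℝ => Real.sqrt (2*(T-ξ)))
        (1 / (2 * Real.sqrt (2*(T-ξ))) * (-2)) ξ :=
      (Real.hasDerivAt_sqrt hwξ.ne').comp ξ h1
    have h3 : HasDerivAt (fun ξ : ℝ => (Real.sqrt (2*(T-ξ)))⁻¹)
        (-(1 / (2 * Real.sqrt (2*(T-ξ))) * (-2)) / (Real.sqrt (2*(T-ξ)))^2) ξ :=
      h2.inv hsξ.ne'
    have h4 := h3.const_mul d
    have heq : u = fun ξ => d * (Real.sqrt (2*(T-ξ)))⁻¹ := by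
      funext ξ; simp [hu, div_eq_mul_inv]
    rw [heq]
    refine (h4.hasDerivWithinAt).congr_deriv (Eq.symm ?_)
    rw [hu']
    set s := Real.sqrt (2*(T-ξ)) with hs
    show d / (2*(T-ξ) * s) = d * (-(1 / (2*s) * -2) / s ^ 2)
    rw [show (2:ℝ)*(T-ξ) = s^2 from (Real.sq_sqrt hwξ.le).symm]
    have hsne : s ≠ 0 := hsξ.ne'
    field_simp
  -- injectivity
  have hinj : InjOn u (Ioo t T) := by
    apply StrictMonoOn.injOn
    intro a ha b hb hab
    have hwa : 0 < 2*(T-a) := hw a ha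
    have hwb : 0 < 2*(T-b) := hw b hb
    have : Real.sqrt (2*(T-b)) < Real.sqrt (2*(T-a)) :=
      Real.sqrt_lt_sqrt hwb.le (by linarith)
    exact div_lt_div_of_pos_left hd (Real.sqrt_pos.2 hwb) this
  -- image
  have himg : u '' Ioo t T = Ioi c := by
    ext y
    constructor
    · rintro ⟨ξ, hξ, rfl⟩
      have hwξ : 0 < 2*(T-ξ) := hw ξ hξ
      have : Real.sqrt (2*(T-ξ)) < Real.sqrt (2*(T-t)) :=
        Real.sqrt_lt_sqrt hwξ.le (by have := hξ.1; linarith)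
      exact div_lt_div_of_pos_left hd (Real.sqrt_pos.2 hwξ) this
    · intro hy
      have hy' : c < y := hy
      have hypos : 0 < y := hcpos.trans hy'
      refine ⟨T - d^2/(2*y^2), ⟨?_, ?_⟩, ?_⟩
      · have hcy : c^2 < y^2 := by
          apply sq_lt_sq' (by linarith) hy'
        have hc2 : c^2 = d^2/(2*(T-t)) := by
          rw [hc, div_pow, Real.sq_sqrt hTt.le]
        have : d^2/(2*y^2) < d^2/(2*c^2) := by
          apply div_lt_div_of_pos_left (by positivity) (by positivity) (by nlinarith)
        have h2 : d^2/(2*c^2) = T - t := by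
          rw [hc2]; field_simp
        linarith
      · have : 0 < d^2/(2*y^2) := by positivity
        linarith
      · have h1 : 2*(T - (T - d^2/(2*y^2))) = (d/y)^2 := by
          field_simp; ring
        simp only [hu, h1, Real.sqrt_sq (by positivity : (0:ℝ) ≤ d/y)]
        field_simp
  -- pointwise identity
  have hpt : ∀ ξ ∈ Ioo t T,
      |u' ξ| • Real.exp (-(u ξ)^2/2)
        = Real.sqrt (2*π) * ((2*(T-ξ))⁻¹ * d *
            (Real.exp (-d^2/(4*(T-ξ))) / Real.sqrt (4*π*(T-ξ)))) := by
    intro ξ hξ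
    have hwξ : 0 < 2*(T-ξ) := hw ξ hξ
    have hsξ : 0 < Real.sqrt (2*(T-ξ)) := Real.sqrt_pos.2 hwξ
    have hsplit : Real.sqrt (4*π*(T-ξ)) = Real.sqrt (2*π) * Real.sqrt (2*(T-ξ)) := by
      rw [← Real.sqrt_mul (by positivity)]
      ring_nf
    have hexp : -(u ξ)^2/2 = -d^2/(4*(T-ξ)) := by
      have hq : (u ξ)^2 = d^2/(2*(T-ξ)) := by
        simp only [hu]; rw [div_pow, Real.sq_sqrt hwξ.le]
      rw [hq, neg_div, div_div, show (2*(T-ξ))*2 = 4*(T-ξ) from by ring, neg_div]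
    have hab : |u' ξ| = d / ((2*(T-ξ)) * Real.sqrt (2*(T-ξ))) := by
      simp only [hu']
      exact abs_of_pos (by positivity)
    rw [smul_eq_mul, hab, hexp, hsplit]
    have h2π : 0 < Real.sqrt (2*π) := Real.sqrt_pos.2 (by positivity)
    set s := Real.sqrt (2*(T-ξ)) with hs
    set q := Real.sqrt (2*π) with hq2
    set Ex := Real.exp (-d^2/(4*(T-ξ))) with hEx
    rw [show (2:ℝ)*(T-ξ) = s^2 from (Real.sq_sqrt hwξ.le).symm]
    field_simp
  have hint2 := MeasureTheory.integrableOn_image_iff_integrableOn_abs_deriv_smul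
      measurableSet_Ioo hderiv hinj (fun y => Real.exp (-y^2/2))
  have hval := MeasureTheory.integral_image_eq_integral_abs_deriv_smul
      measurableSet_Ioo hderiv hinj (fun y => Real.exp (-y^2/2))
  rw [himg] at hint2 hval
  have hgauss : IntegrableOn (fun y => Real.exp (-y^2/2)) (Ioi c) := by
    have h := integrable_exp_neg_mul_sq (by norm_num : (0:ℝ) < 1/2)
    have : (fun y : ℝ => Real.exp (-y^2/2)) = fun y => Real.exp (-(1/2)*y^2) := by
      funext y; ring_nf
    rw [this]
    exact h.integrableOn
  constructor
  · have := hint2.1 hgauss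
    have heq : (fun ξ => |u' ξ| • Real.exp (-(u ξ)^2/2))
        =ᵐ[volume.restrict (Ioo t T)] fun ξ => Real.sqrt (2*π) * ((2*(T-ξ))⁻¹ * d *
            (Real.exp (-d^2/(4*(T-ξ))) / Real.sqrt (4*π*(T-ξ)))) := by
      exact (ae_restrict_iff' measurableSet_Ioo).2 (Eventually.of_forall fun ξ hξ => hpt ξ hξ)
    have h2 := (MeasureTheory.Integrable.congr this heq)
    have h2π : Real.sqrt (2*π) ≠ 0 := by positivity
    exact (integrable_const_mul_iff (isUnit_iff_ne_zero.2 h2π) _).1 h2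
  · rw [hval, MeasureTheory.setIntegral_congr_fun measurableSet_Ioo hpt,
      MeasureTheory.integral_const_mul, ← mul_assoc,
      inv_mul_cancel₀ (by positivity : Real.sqrt (2*π) ≠ 0), one_mul]

lemma tangent_norm_le (γ : ℝ → ℝ → E2) (x t : ℝ) : ‖tangent γ x t‖ ≤ 1 := by
  rw [tangent, norm_smul, norm_inv, norm_norm]
  rcases eq_or_ne ‖dX γ x t‖ 0 with h | h
  · simp [h]
  · rw [inv_mul_cancel₀ h]

lemma heatKer_nonneg (T : ℝ) (x₀ x : E2) (t : ℝ) : 0 ≤ heatKer T x₀ x t :=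
  div_nonneg (Real.exp_nonneg _) (Real.sqrt_nonneg _)

lemma bt_bound (γ : Fin 3 → ℝ → ℝ → E2) (P : Fin 3 → E2) (T : ℝ) (x₀ : E2) (i : Fin 3)
    (ξ : ℝ) (hξ : ξ < T) :
    ‖boundaryTerm γ P T x₀ i ξ‖ ≤ (2*(T-ξ))⁻¹ * ‖P i - x₀‖ *
      (Real.exp (-‖P i - x₀‖^2/(4*(T-ξ))) / Real.sqrt (4*π*(T-ξ))) := by
  have hwξ : 0 < 2*(T-ξ) := by linarith
  have hker : heatKer T x₀ (P i) ξ
      = Real.exp (-‖P i - x₀‖^2/(4*(T-ξ))) / Real.sqrt (4*π*(T-ξ)) := rfl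
  have hker0 : 0 ≤ heatKer T x₀ (P i) ξ := heatKer_nonneg T x₀ (P i) ξ
  have h1 : |(inner ℝ ((2*(T-ξ))⁻¹ • (P i - x₀)) (tangent (γ i) 1 ξ) : ℝ)|
      ≤ (2*(T-ξ))⁻¹ * ‖P i - x₀‖ := by
    calc |(inner ℝ ((2*(T-ξ))⁻¹ • (P i - x₀)) (tangent (γ i) 1 ξ) : ℝ)|
        ≤ ‖(2*(T-ξ))⁻¹ • (P i - x₀)‖ * ‖tangent (γ i) 1 ξ‖ := abs_real_inner_le_norm _ _
      _ ≤ ‖(2*(T-ξ))⁻¹ • (P i - x₀)‖ * 1 := by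
          exact mul_le_mul_of_nonneg_left (tangent_norm_le _ _ _) (norm_nonneg _)
      _ = (2*(T-ξ))⁻¹ * ‖P i - x₀‖ := by
          rw [mul_one, norm_smul, Real.norm_eq_abs, abs_of_pos (by positivity)]
  calc ‖boundaryTerm γ P T x₀ i ξ‖
      = |(inner ℝ ((2*(T-ξ))⁻¹ • (P i - x₀)) (tangent (γ i) 1 ξ) : ℝ)|
          * heatKer T x₀ (P i) ξ := by
        rw [boundaryTerm, Real.norm_eq_abs, abs_mul, abs_of_nonneg hker0]
    _ ≤ ((2*(T-ξ))⁻¹ * ‖P i - x₀‖) * heatKer T x₀ (P i) ξ :=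
        mul_le_mul_of_nonneg_right h1 hker0
    _ = (2*(T-ξ))⁻¹ * ‖P i - x₀‖ *
          (Real.exp (-‖P i - x₀‖^2/(4*(T-ξ))) / Real.sqrt (4*π*(T-ξ))) := by rw [hker]

lemma gauss_integrable : Integrable (fun y : ℝ => Real.exp (-y^2/2)) := by
  have h := integrable_exp_neg_mul_sq (by norm_num : (0:ℝ) < 1/2)
  have he : (fun y : ℝ => Real.exp (-y^2/2)) = fun y => Real.exp (-(1/2)*y^2) := by
    funext y; ring_nf
  rw [he]; exact h

lemma gauss_tail_tendsto :
    Tendsto (fun c : ℝ => ∫ y in Ioi c, Real.exp (-y^2/2)) atTop (𝓝 0) := by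
  have hgi : IntegrableOn (fun y : ℝ => Real.exp (-y^2/2)) (Ioi 0) :=
    gauss_integrable.integrableOn
  have h1 : Tendsto (fun c : ℝ => ∫ y in (0:ℝ)..c, Real.exp (-y^2/2)) atTop
      (𝓝 (∫ y in Ioi (0:ℝ), Real.exp (-y^2/2))) :=
    MeasureTheory.intervalIntegral_tendsto_integral_Ioi 0 hgi tendsto_id
  have h2 := (tendsto_const_nhds (x := ∫ y in Ioi (0:ℝ), Real.exp (-y^2/2))
      (f := atTop)).sub h1
  rw [sub_self] at h2
  refine h2.congr' ?_
  filter_upwards [eventually_ge_atTop (0:ℝ)] with c hc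
  rw [intervalIntegral.integral_of_le hc]
  have hsplit : ∫ y in Ioi (0:ℝ), Real.exp (-y^2/2)
      = (∫ y in Ioc (0:ℝ) c, Real.exp (-y^2/2)) + ∫ y in Ioi c, Real.exp (-y^2/2) := by
    rw [← MeasureTheory.setIntegral_union (Ioc_disjoint_Ioi le_rfl) measurableSet_Ioi
      (hgi.mono_set Ioc_subset_Ioi_self) (hgi.mono_set (Ioi_subset_Ioi hc)),
      Ioc_union_Ioi_eq_Ioi hc]
  rw [hsplit]; ring

/-- Let `𝕋_t` be a triod evolving by curvature on `[0,T)` with fixed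
endpoints `P¹,P²,P³`, and set `dⁱ = |Pⁱ − x₀|`. Then for every `i` and `t ∈ [0,T)`,
`|∫_t^T ⟨(Pⁱ−x₀)/(2(T−ξ)), τⁱ(1,ξ)⟩ ρ_{x₀}(Pⁱ,ξ) dξ|
  ≤ (1/√(2π)) ∫_{dⁱ/√(2(T−t))}^{∞} e^{−y²/2} dy ≤ 1/2`
(the bound by `1/2` holding for every `x₀`); consequently, whenever `x₀ ≠ Pⁱ` for all
`i`, `lim_{t→T} Σᵢ ∫_t^T ⟨(Pⁱ−x₀)/(2(T−ξ)), τⁱ(1,ξ)⟩ ρ_{x₀}(Pⁱ,ξ) dξ = 0`. -/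
theorem boundary_term_estimate
    (Ω : Set E2) (P : Fin 3 → E2) (T : ℝ) (hT : 0 < T)
    (γ : Fin 3 → ℝ → ℝ → E2)
    (hflow : IsTriodFlow Ω P γ (Ico 0 T))
    (x₀ : E2) :
    (∀ i : Fin 3, ∀ t ∈ Ico 0 T,
      |∫ ξ in t..T, boundaryTerm γ P T x₀ i ξ| ≤
          (Real.sqrt (2 * π))⁻¹ *
            (∫ y in Ioi (‖P i - x₀‖ / Real.sqrt (2 * (T - t))), Real.exp (-y ^ 2 / 2)) ∧
        (Real.sqrt (2 * π))⁻¹ *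
            (∫ y in Ioi (‖P i - x₀‖ / Real.sqrt (2 * (T - t))), Real.exp (-y ^ 2 / 2)) ≤
          1 / 2) ∧
    ((∀ i, x₀ ≠ P i) →
      Tendsto (fun t => ∑ i : Fin 3, ∫ ξ in t..T, boundaryTerm γ P T x₀ i ξ)
        (𝓝[<] T) (𝓝 0)) := by
  have hπ : (0:ℝ) < Real.sqrt (2*π) := Real.sqrt_pos.2 (by positivity)
  have tail_nonneg : ∀ c : ℝ, 0 ≤ ∫ y in Ioi c, Real.exp (-y^2/2) := fun c =>
    MeasureTheory.setIntegral_nonneg measurableSet_Ioi fun y _ => Real.exp_nonneg _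
  have keyA : ∀ (i : Fin 3) (t : ℝ), t ∈ Ico 0 T →
      |∫ ξ in t..T, boundaryTerm γ P T x₀ i ξ| ≤
        (Real.sqrt (2 * π))⁻¹ *
          (∫ y in Ioi (‖P i - x₀‖ / Real.sqrt (2 * (T - t))), Real.exp (-y ^ 2 / 2)) := by
    intro i t ht
    rcases eq_or_lt_of_le (norm_nonneg (P i - x₀)) with hd | hd
    · have h0 : P i - x₀ = 0 := norm_eq_zero.1 hd.symm
      have hz : ∀ ξ : ℝ, boundaryTerm γ P T x₀ i ξ = 0 := by
        intro ξ
        rw [boundaryTerm, h0, smul_zero, inner_zero_left, zero_mul]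
      simp only [hz, intervalIntegral.integral_zero, abs_zero]
      exact mul_nonneg (by positivity) (tail_nonneg _)
    · obtain ⟨hint, hval⟩ := gauss_change T t ‖P i - x₀‖ ht.2 hd
      set g : ℝ → ℝ := fun ξ => (2*(T-ξ))⁻¹ * ‖P i - x₀‖ *
        (Real.exp (-‖P i - x₀‖^2/(4*(T-ξ))) / Real.sqrt (4*π*(T-ξ))) with hg
      have hgii : IntervalIntegrable g volume t T :=
        (intervalIntegrable_iff_integrableOn_Ioo_of_le ht.2.le).2 hint
      have hae : ∀ᵐ ξ ∂volume.restrict (Set.uIoc t T), ‖boundaryTerm γ P T x₀ i ξ‖ ≤ g ξ := by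
        rw [uIoc_of_le ht.2.le]
        have hne : ∀ᵐ ξ ∂(volume : Measure ℝ), ξ ≠ T := by
          rw [ae_iff]
          simp only [not_not, setOf_eq_eq_singleton]
          exact measure_singleton T
        filter_upwards [MeasureTheory.ae_restrict_mem measurableSet_Ioc,
          MeasureTheory.ae_restrict_of_ae hne] with ξ hξ hξT
        exact bt_bound γ P T x₀ i ξ (lt_of_le_of_ne hξ.2 hξT)
      have hle := intervalIntegral.norm_integral_le_abs_of_norm_le hae hgii
      have hgeq : ∫ ξ in t..T, g ξ = ∫ ξ in Ioo t T, g ξ := by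
        rw [intervalIntegral.integral_of_le ht.2.le,
          MeasureTheory.integral_Ioc_eq_integral_Ioo]
      calc |∫ ξ in t..T, boundaryTerm γ P T x₀ i ξ| ≤ |∫ ξ in t..T, g ξ| := hle
        _ = (Real.sqrt (2 * π))⁻¹ *
            (∫ y in Ioi (‖P i - x₀‖ / Real.sqrt (2 * (T - t))), Real.exp (-y ^ 2 / 2)) := by
          rw [hgeq, hval]
          exact abs_of_nonneg (mul_nonneg (by positivity) (tail_nonneg _))
  have keyB : ∀ c : ℝ, 0 ≤ c →
      (Real.sqrt (2 * π))⁻¹ * (∫ y in Ioi c, Real.exp (-y ^ 2 / 2)) ≤ 1 / 2 := by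
    intro c hc
    have hmono : (∫ y in Ioi c, Real.exp (-y^2/2)) ≤ ∫ y in Ioi (0:ℝ), Real.exp (-y^2/2) :=
      MeasureTheory.setIntegral_mono_set gauss_integrable.integrableOn
        (Eventually.of_forall fun y => Real.exp_nonneg _)
        (HasSubset.Subset.eventuallyLE (Ioi_subset_Ioi hc))
    have h0 : (∫ y in Ioi (0:ℝ), Real.exp (-y^2/2)) = Real.sqrt (2*π) / 2 := by
      have he : (fun y : ℝ => Real.exp (-y^2/2)) = fun y => Real.exp (-(1/2)*y^2) := by
        funext y; ring_nf
      rw [he, integral_gaussian_Ioi (1/2), show π / (1/2 : ℝ) = 2*π by ring]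
    calc (Real.sqrt (2 * π))⁻¹ * (∫ y in Ioi c, Real.exp (-y ^ 2 / 2))
        ≤ (Real.sqrt (2 * π))⁻¹ * (Real.sqrt (2*π) / 2) := by
          exact mul_le_mul_of_nonneg_left (hmono.trans h0.le) (by positivity)
      _ = 1 / 2 := by
          rw [mul_div_assoc', inv_mul_cancel₀ hπ.ne']
  refine ⟨fun i t ht => ⟨keyA i t ht, keyB _ (by positivity)⟩, ?_⟩
  intro hx
  have hterm : ∀ i : Fin 3,
      Tendsto (fun t => ∫ ξ in t..T, boundaryTerm γ P T x₀ i ξ) (𝓝[<] T) (𝓝 0) := by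
    intro i
    have hd : 0 < ‖P i - x₀‖ := norm_pos_iff.2 (sub_ne_zero_of_ne (Ne.symm (hx i)))
    have h1 : Tendsto (fun t : ℝ => 2*(T-t)) (𝓝[<] T) (𝓝[>] 0) := by
      apply tendsto_nhdsWithin_of_tendsto_nhds_of_eventually_within
      · have hcont : Continuous fun t : ℝ => 2*(T-t) := by continuity
        have := (hcont.tendsto T).mono_left (nhdsWithin_le_nhds (s := Iio T))
        simpa using this
      · filter_upwards [self_mem_nhdsWithin] with t ht'
        have : t < T := ht'
        simp only [mem_Ioi]
        linarith
    have h2 : Tendsto Real.sqrt (𝓝[>] (0:ℝ)) (𝓝[>] (0:ℝ)) := by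
      apply tendsto_nhdsWithin_of_tendsto_nhds_of_eventually_within
      · have := (Real.continuous_sqrt.tendsto 0).mono_left (nhdsWithin_le_nhds (s := Ioi (0:ℝ)))
        simpa using this
      · filter_upwards [self_mem_nhdsWithin] with x hx'
        exact Real.sqrt_pos.2 hx'
    have h3 : Tendsto (fun x : ℝ => ‖P i - x₀‖ / x) (𝓝[>] (0:ℝ)) atTop := by
      have h4 := Tendsto.const_mul_atTop hd tendsto_inv_nhdsGT_zero
      simpa [div_eq_mul_inv] using h4
    have hc : Tendsto (fun t : ℝ => ‖P i - x₀‖ / Real.sqrt (2*(T-t))) (𝓝[<] T) atTop :=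
      h3.comp (h2.comp h1)
    have hR : Tendsto (fun t : ℝ => (Real.sqrt (2 * π))⁻¹ *
        (∫ y in Ioi (‖P i - x₀‖ / Real.sqrt (2 * (T - t))), Real.exp (-y ^ 2 / 2)))
        (𝓝[<] T) (𝓝 0) := by
      have := (gauss_tail_tendsto.comp hc).const_mul (Real.sqrt (2 * π))⁻¹
      simpa using this
    apply squeeze_zero_norm' ?_ hR
    filter_upwards [Ioo_mem_nhdsLT_of_mem (⟨hT, le_refl T⟩ : T ∈ Ioc 0 T)] with t ht'
    simpa [Real.norm_eq_abs] using keyA i t ⟨ht'.1.le, ht'.2⟩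
  have := tendsto_finset_sum (Finset.univ : Finset (Fin 3))
    (fun i _ => hterm i)
  simpa using this
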